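/- arXiv:2309.02960 — 4 statements merged into one kernel-verified Lean document; each statement's English description precedes it below -/
import Mathlib

section
/- Let X ⊆ ℤ^{n₁} with k₁-adjacency and Y ⊆ ℤ^{n₂} with k₂-adjacency be digital images. Every radius 2-local (k₁,k₂)-isomorphism h : X → Y is a local (k₁,k₂)-isomorphism. -/
/-- Two points of `ℤⁿ` are `k(t,n)`-adjacent if they are distinct, at most `t` of their
coordinates differ by exactly `1` in absolute value, and all other coordinates coincide. -/
def DigAdj {n : ℕ} (t : ℕ) (p q : Fin n → ℤ) : Prop :=
  p ≠ q ∧ (∀ i, p i = q i ∨ |p i - q i| = 1) ∧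
    (Finset.univ.filter fun i => p i ≠ q i).card ≤ t

/-- The adjacency relation induced on a digital image `X ⊆ ℤⁿ`. -/
def adjOn {n : ℕ} (t : ℕ) (X : Set (Fin n → ℤ)) (x y : X) : Prop :=
  DigAdj t (x : Fin n → ℤ) (y : Fin n → ℤ)

/-- Digital `(k₁,k₂)`-continuity of a map between digital images. -/
def DigContinuous {n₁ n₂ : ℕ} (t₁ t₂ : ℕ) (X : Set (Fin n₁ → ℤ)) (Y : Set (Fin n₂ → ℤ))
    (f : X → Y) : Prop :=
  ∀ x x' : X, adjOn t₁ X x x' → f x = f x' ∨ adjOn t₂ Y (f x) (f x')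

/-- There is a `k`-path of length at most `ε` (w.r.t. an adjacency `adj`) from `x` to `y`;
equivalently, the length `l_k(x,y)` of a shortest `k`-path from `x` to `y` is at most `ε`. -/
def reachesIn {α : Type*} (adj : α → α → Prop) (x y : α) (ε : ℕ) : Prop :=
  ∃ l, l ≤ ε ∧ ∃ c : ℕ → α, c 0 = x ∧ c l = y ∧ ∀ i, i < l → adj (c i) (c (i + 1))

/-- The digital neighborhood `N_k(x₀, ε) = {x : l_k(x₀,x) ≤ ε} ∪ {x₀}`. -/
def Nbd {α : Type*} (adj : α → α → Prop) (x₀ : α) (ε : ℕ) : Set α :=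
  {x | reachesIn adj x₀ x ε} ∪ {x₀}

/-- `f` maps `A` `(k₁,k₂)`-isomorphically onto `B`: the restriction of `f` is a bijection
from `A` onto `B` which is `(k₁,k₂)`-continuous and whose inverse is `(k₂,k₁)`-continuous. -/
def IsIsoOn {α β : Type*} (adjA : α → α → Prop) (adjB : β → β → Prop)
    (f : α → β) (A : Set α) (B : Set β) : Prop :=
  Set.BijOn f A B ∧
    (∀ x ∈ A, ∀ x' ∈ A, adjA x x' → f x = f x' ∨ adjB (f x) (f x')) ∧
    (∀ x ∈ A, ∀ x' ∈ A, adjB (f x) (f x') → x = x' ∨ adjA x x')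

/-- A local `(k₁,k₂)`-isomorphism: for every `x ∈ X`, `h` maps `N_{k₁}(x,1)`
`(k₁,k₂)`-isomorphically onto `N_{k₂}(h(x),1)`. -/
def LocalIso {n₁ n₂ : ℕ} (t₁ t₂ : ℕ) (X : Set (Fin n₁ → ℤ)) (Y : Set (Fin n₂ → ℤ))
    (h : X → Y) : Prop :=
  ∀ x : X, IsIsoOn (adjOn t₁ X) (adjOn t₂ Y) h
    (Nbd (adjOn t₁ X) x 1) (Nbd (adjOn t₂ Y) (h x) 1)

/-- A radius `2`-local `(k₁,k₂)`-isomorphism: for every `x ∈ X`, `h` maps `N_{k₁}(x,2)`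
`(k₁,k₂)`-isomorphically onto `N_{k₂}(h(x),2)`. -/
def Radius2LocalIso {n₁ n₂ : ℕ} (t₁ t₂ : ℕ) (X : Set (Fin n₁ → ℤ)) (Y : Set (Fin n₂ → ℤ))
    (h : X → Y) : Prop :=
  ∀ x : X, IsIsoOn (adjOn t₁ X) (adjOn t₂ Y) h
    (Nbd (adjOn t₁ X) x 2) (Nbd (adjOn t₂ Y) (h x) 2)

lemma mem_Nbd_one {α : Type*} (adj : α → α → Prop) (x y : α) :
    y ∈ Nbd adj x 1 ↔ y = x ∨ adj x y := by
  constructor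
  · rintro (⟨l, hl, c, hc0, hcl, hadj⟩ | rfl)
    · interval_cases l
      · left; rw [← hc0, hcl]
      · right; have := hadj 0 (by norm_num); rwa [hc0, hcl] at this
    · left; rfl
  · rintro (rfl | hadj)
    · right; rfl
    · left
      exact ⟨1, le_refl 1, (fun i => if i = 0 then x else y), by simp, by simp,
        fun i hi => by interval_cases i; simpa using hadj⟩

lemma Nbd_one_subset_two {α : Type*} (adj : α → α → Prop) (x : α) :
    Nbd adj x 1 ⊆ Nbd adj x 2 := by
  rintro y (⟨l, hl, hc⟩ | rfl)
  · exact Or.inl ⟨l, hl.trans one_le_two, hc⟩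
  · exact Or.inr rfl

/-- every radius `2`-local `(k₁,k₂)`-isomorphism is a local
`(k₁,k₂)`-isomorphism. -/
theorem radius2LocalIso_localIso
    {n₁ n₂ t₁ t₂ : ℕ} (ht₁ : 1 ≤ t₁) (ht₁n : t₁ ≤ n₁) (ht₂ : 1 ≤ t₂) (ht₂n : t₂ ≤ n₂)
    (X : Set (Fin n₁ → ℤ)) (Y : Set (Fin n₂ → ℤ)) (h : X → Y)
    (hr : Radius2LocalIso t₁ t₂ X Y h) :
    LocalIso t₁ t₂ X Y h := by
  intro x
  obtain ⟨hbij, hcont, hinv⟩ := hr x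
  have hsub := Nbd_one_subset_two (adjOn t₁ X) x
  have hsub' := Nbd_one_subset_two (adjOn t₂ Y) (h x)
  have hmaps : ∀ y ∈ Nbd (adjOn t₁ X) x 1, h y ∈ Nbd (adjOn t₂ Y) (h x) 1 := by
    intro y hy
    rw [mem_Nbd_one] at hy ⊢
    rcases hy with rfl | hadj
    · exact Or.inl rfl
    · have hx2 : x ∈ Nbd (adjOn t₁ X) x 2 := Or.inr rfl
      rcases hcont x hx2 y (hsub ((mem_Nbd_one _ _ _).mpr (Or.inr hadj))) hadj with heq | hadj'
      · exact Or.inl heq.symm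
      · exact Or.inr hadj'
  refine ⟨⟨hmaps, fun a ha b hb hab => hbij.2.1 (hsub ha) (hsub hb) hab, ?_⟩,
    fun a ha b hb hab => hcont a (hsub ha) b (hsub hb) hab,
    fun a ha b hb hab => hinv a (hsub ha) b (hsub hb) hab⟩
  intro z hz
  rw [mem_Nbd_one] at hz
  rcases hz with rfl | hadj
  · exact ⟨x, (mem_Nbd_one _ _ _).mpr (Or.inl rfl), rfl⟩
  · obtain ⟨y, hy2, hyz⟩ := hbij.2.2 (hsub' ((mem_Nbd_one _ _ _).mpr (Or.inr hadj)))
    refine ⟨y, (mem_Nbd_one _ _ _).mpr ?_, hyz⟩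
    rcases hinv x (Or.inr rfl) y hy2 (by rw [hyz]; exact hadj) with rfl | hadj'
    · exact Or.inl rfl
    · exact Or.inr hadj'
end

section
/- There exist digital images X ⊆ ℤ^{n₁} with k₁-adjacency and Y ⊆ ℤ^{n₂} with k₂-adjacency and a map h : X → Y that is a local (k₁,k₂)-isomorphism but not a radius 2-local (k₁,k₂)-isomorphism. -/
-- decidability
instance {n t : ℕ} (p q : Fin n → ℤ) : Decidable (DigAdj t p q) := by
  unfold DigAdj; infer_instance

instance {n t : ℕ} (X : Set (Fin n → ℤ)) (x y : X) : Decidable (adjOn t X x y) := by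
  unfold adjOn; infer_instance

instance decBijOn {α β : Type*} [Fintype α] [Fintype β] [DecidableEq α] [DecidableEq β]
    (f : α → β) (A : Set α) (B : Set β)
    [DecidablePred (· ∈ A)] [DecidablePred (· ∈ B)] : Decidable (Set.BijOn f A B) :=
  decidable_of_iff ((∀ a, a ∈ A → f a ∈ B) ∧
      (∀ a, a ∈ A → ∀ b, b ∈ A → f a = f b → a = b) ∧
      (∀ y, y ∈ B → ∃ a, a ∈ A ∧ f a = y)) (by
    unfold Set.BijOn Set.MapsTo Set.InjOn Set.SurjOn
    constructor
    · rintro ⟨h1, h2, h3⟩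
      refine ⟨h1, h2, ?_⟩
      intro y hy
      obtain ⟨a, ha, hfa⟩ := h3 y hy
      exact ⟨a, ha, hfa⟩
    · rintro ⟨h1, h2, h3⟩
      refine ⟨h1, h2, ?_⟩
      intro y hy
      obtain ⟨a, ha, hfa⟩ := h3 hy
      exact ⟨a, ha, hfa⟩)

instance decIsIsoOn {α β : Type*} [Fintype α] [Fintype β] [DecidableEq α] [DecidableEq β]
    (adjA : α → α → Prop) (adjB : β → β → Prop)
    [∀ x y, Decidable (adjA x y)] [∀ x y, Decidable (adjB x y)]
    (f : α → β) (A : Set α) (B : Set β)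
    [DecidablePred (· ∈ A)] [DecidablePred (· ∈ B)] : Decidable (IsIsoOn adjA adjB f A B) := by
  unfold IsIsoOn; infer_instance

-- reaches lemmas
lemma reachesIn_one_iff {α : Type*} (adj : α → α → Prop) (x y : α) :
    reachesIn adj x y 1 ↔ x = y ∨ adj x y := by
  constructor
  · rintro ⟨l, hl, c, h0, hc, hs⟩
    interval_cases l
    · exact Or.inl (h0 ▸ hc)
    · exact Or.inr (h0 ▸ hc ▸ hs 0 (by omega))
  · rintro (rfl | h)
    · exact ⟨0, by omega, fun _ => x, rfl, rfl, fun i hi => absurd hi (by omega)⟩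
    · exact ⟨1, le_refl _, fun i => if i = 0 then x else y, by simp, by simp, by
        intro i hi
        have : i = 0 := by omega
        subst this; simpa using h⟩

lemma reachesIn_two_iff {α : Type*} (adj : α → α → Prop) (x y : α) :
    reachesIn adj x y 2 ↔ x = y ∨ adj x y ∨ ∃ z, adj x z ∧ adj z y := by
  constructor
  · rintro ⟨l, hl, c, h0, hc, hs⟩
    interval_cases l
    · exact Or.inl (h0 ▸ hc)
    · exact Or.inr (Or.inl (h0 ▸ hc ▸ hs 0 (by omega)))
    · refine Or.inr (Or.inr ⟨c 1, h0 ▸ hs 0 (by omega), hc ▸ hs 1 (by omega)⟩)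
  · rintro (rfl | h | ⟨z, h1, h2⟩)
    · exact ⟨0, by omega, fun _ => x, rfl, rfl, fun i hi => absurd hi (by omega)⟩
    · exact ⟨1, by omega, fun i => if i = 0 then x else y, by simp, by simp, by
        intro i hi
        have : i = 0 := by omega
        subst this; simpa using h⟩
    · refine ⟨2, le_refl _, fun i => if i = 0 then x else if i = 1 then z else y,
        by simp, by simp, ?_⟩
      intro i hi
      interval_cases i
      · simpa using h1
      · simpa using h2

lemma Nbd_one {α : Type*} (adj : α → α → Prop) (x : α) :
    Nbd adj x 1 = {y | x = y ∨ adj x y} := by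
  ext y
  simp only [Nbd, Set.mem_union, Set.mem_setOf_eq, Set.mem_singleton_iff,
    reachesIn_one_iff]
  constructor
  · rintro (h | rfl)
    · exact h
    · exact Or.inl rfl
  · exact fun h => Or.inl h

lemma Nbd_two {α : Type*} (adj : α → α → Prop) (x : α) :
    Nbd adj x 2 = {y | x = y ∨ adj x y ∨ ∃ z, adj x z ∧ adj z y} := by
  ext y
  simp only [Nbd, Set.mem_union, Set.mem_setOf_eq, Set.mem_singleton_iff,
    reachesIn_two_iff]
  constructor
  · rintro (h | rfl)
    · exact h
    · exact Or.inl rfl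
  · exact fun h => Or.inl h

-- concrete sets
def SX : Finset (Fin 2 → ℤ) :=
  {![0,0], ![1,0], ![2,0], ![2,1], ![2,2], ![1,2], ![0,2], ![0,1]}

def SY : Finset (Fin 2 → ℤ) := {![0,0], ![1,0], ![1,1], ![0,1]}

def g : (Fin 2 → ℤ) → (Fin 2 → ℤ) := fun p =>
  if p = ![2,0] then ![1,1]
  else if p = ![2,1] then ![0,1]
  else if p = ![2,2] then ![0,0]
  else if p = ![1,2] then ![1,0]
  else if p = ![0,2] then ![1,1]
  else p

instance (s : Finset (Fin 2 → ℤ)) : DecidablePred (· ∈ (↑s : Set (Fin 2 → ℤ))) :=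
  fun a => decidable_of_iff (a ∈ s) Finset.mem_coe.symm

lemma hg : ∀ p ∈ SX, g p ∈ SY := by decide

def hmap : (↑SX : Set (Fin 2 → ℤ)) → (↑SY : Set (Fin 2 → ℤ)) :=
  fun a => ⟨g a.1, Finset.mem_coe.mpr (hg a.1 (Finset.mem_coe.mp a.2))⟩

example : True := trivial

def x0 : (↑SX : Set (Fin 2 → ℤ)) := ⟨![0,0], by decide⟩

set_option maxHeartbeats 1000000 in
/-- there exist digital images and a map between them that is a local
`(k₁,k₂)`-isomorphism but not a radius `2`-local `(k₁,k₂)`-isomorphism. -/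
theorem exists_localIso_not_radius2LocalIso :
    ∃ (n₁ n₂ t₁ t₂ : ℕ), 1 ≤ t₁ ∧ t₁ ≤ n₁ ∧ 1 ≤ t₂ ∧ t₂ ≤ n₂ ∧
      ∃ (X : Set (Fin n₁ → ℤ)) (Y : Set (Fin n₂ → ℤ)) (h : X → Y),
        LocalIso t₁ t₂ X Y h ∧ ¬ Radius2LocalIso t₁ t₂ X Y h := by
  refine ⟨2, 2, 1, 1, le_refl 1, by norm_num, le_refl 1, by norm_num,
    ↑SX, ↑SY, hmap, ?_, ?_⟩
  · unfold LocalIso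
    simp only [Nbd_one]
    decide
  · intro H
    have h2 := H x0
    rw [Nbd_two, Nbd_two] at h2
    revert h2
    decide
end

section
/- Let SC_k^{n,4} = (s_i)_{i=0}^{3} be a simple closed k-curve with 4 elements in ℤⁿ, n ≥ 2, and let p : ℤ → {s₀,s₁,s₂,s₃} be given by p(t) = s_{t mod 4}, where ℤ carries the 2-adjacency. Then p is not a radius 2-local (2,k)-isomorphism. -/
/-- A simple closed `k`-curve `SC_k^{n,l}` with `l` elements in `ℤⁿ`: a sequence
`(s_i)_{i=0}^{l-1}` of distinct points such that `s_i` and `s_j` are `k`-adjacent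
if and only if `i - j ≡ ±1 (mod l)`. -/
def IsSC {n : ℕ} (t l : ℕ) (s : ZMod l → (Fin n → ℤ)) : Prop :=
  Function.Injective s ∧
    ∀ i j : ZMod l, DigAdj t (s i) (s j) ↔ (i = j + 1 ∨ j = i + 1)

/-- for `l = 4`, the map `p : ℤ → SC_k^{n,4}`, `p(t) = s_{t mod 4}`,
where `ℤ = ℤ¹` carries the `2 = k(1,1)`-adjacency, is not a radius `2`-local
`(2,k)`-isomorphism. -/
theorem sc4_covering_not_radius2LocalIso
    {n t : ℕ} (hn : 2 ≤ n) (ht : 1 ≤ t) (htn : t ≤ n)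
    (s : ZMod 4 → (Fin n → ℤ)) (hs : IsSC t 4 s) :
    ¬ Radius2LocalIso 1 t (Set.univ : Set (Fin 1 → ℤ)) (Set.range s)
      (fun x => ⟨s (((x : Fin 1 → ℤ) 0 : ℤ) : ZMod 4), Set.mem_range_self _⟩) := by

  intro h
  -- points of ℤ¹ as elements of the universal set
  let e : ℤ → (Set.univ : Set (Fin 1 → ℤ)) := fun m => ⟨fun _ => m, trivial⟩
  have adj_e : ∀ m m' : ℤ, |m - m'| = 1 →
      adjOn 1 (Set.univ : Set (Fin 1 → ℤ)) (e m) (e m') := by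
    intro m m' hmm
    have hne : m ≠ m' := by
      intro hEq; rw [hEq] at hmm; simp at hmm
    refine ⟨?_, fun i => Or.inr hmm, ?_⟩
    · intro hEq
      exact hne (congrFun hEq 0)
    · calc (Finset.univ.filter fun i : Fin 1 => (e m : Fin 1 → ℤ) i ≠ (e m' : Fin 1 → ℤ) i).card
          ≤ (Finset.univ : Finset (Fin 1)).card := Finset.card_filter_le _ _
        _ = 1 := by simp
  have hmem : ∀ m : ℤ, |m| = 2 → e m ∈ Nbd (adjOn 1 (Set.univ : Set (Fin 1 → ℤ))) (e 0) 2 := by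
    intro m hm
    rcases abs_eq (by norm_num : (0:ℤ) ≤ 2) |>.mp hm with hm | hm
    · refine Or.inl ⟨2, le_refl _, fun i => e (i : ℤ), rfl, by rw [hm]; rfl, ?_⟩
      intro i hi
      apply adj_e
      push_cast
      simp
    · refine Or.inl ⟨2, le_refl _, fun i => e (-(i : ℤ)), by simp [e], by rw [hm]; norm_num, ?_⟩
      intro i hi
      apply adj_e
      push_cast
      ring_nf
      simp [abs_neg]
  have h0 := (h (e 0)).1.2.1 (hmem 2 (by norm_num)) (hmem (-2) (by norm_num))
  have hcast : (((-2 : ℤ) : ZMod 4)) = ((2 : ℤ) : ZMod 4) := by decide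
  have : e 2 = e (-2) := by
    apply h0
    show (⟨s (((2:ℤ) : ZMod 4)), _⟩ : Set.range s) = ⟨s (((-2:ℤ) : ZMod 4)), _⟩
    exact Subtype.ext (by rw [hcast])
  have := congrFun (Subtype.ext_iff.mp this) 0
  norm_num [e] at this
end

section
/- For every n ≥ 2 and every simple closed (3ⁿ−1)-curve SC_{3ⁿ−1}^{n,4} = (s_i)_{i=0}^{3} with 4 elements in ℤⁿ, the digital image SC_{3ⁿ−1}^{n,4} is pointed (3ⁿ−1)-contractible: the identity map of SC_{3ⁿ−1}^{n,4} is pointed (3ⁿ−1)-homotopic to the constant map with value s₀, via a homotopy fixing s₀. -/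
/-- One step of the contraction of the 4-cycle: `0,1,3 ↦ 0`, `2 ↦ 1`. -/
def step4 : ZMod 4 → ZMod 4 := fun i => if i = 2 then 1 else 0

lemma step4_zero : ∀ k : ℕ, step4^[k] (0 : ZMod 4) = 0 := by
  intro k
  induction k with
  | zero => rfl
  | succ k ih => rw [Function.iterate_succ_apply', ih]; decide

/-- for every `n ≥ 2`, any simple closed `(3ⁿ-1)`-curve
`SC_{3ⁿ-1}^{n,4}` (note `k(n,n) = 3ⁿ-1`) is pointed `(3ⁿ-1)`-contractible: the identity
map is `(3ⁿ-1)`-homotopic to the constant map at `s₀` via a homotopy fixing `s₀`. -/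
theorem sc4_pointed_contractible
    {n : ℕ} (hn : 2 ≤ n) (s : ZMod 4 → (Fin n → ℤ)) (hs : IsSC n 4 s) :
    ∃ m : ℕ, ∃ H : ↥(Set.range s) → ℕ → ↥(Set.range s),
      (∀ x, H x 0 = x) ∧
      (∀ x, H x m = ⟨s 0, Set.mem_range_self 0⟩) ∧
      (∀ i, i ≤ m → DigContinuous n n (Set.range s) (Set.range s) (fun x => H x i)) ∧
      (∀ x, ∀ i, i < m →
        H x i = H x (i + 1) ∨ adjOn n (Set.range s) (H x i) (H x (i + 1))) ∧
      (∀ i, i ≤ m → H ⟨s 0, Set.mem_range_self 0⟩ i = ⟨s 0, Set.mem_range_self 0⟩) := by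
  classical
  obtain ⟨hinj, hadj⟩ := hs
  have hmem : ∀ a : ZMod 4, s a ∈ Set.range s := fun a => Set.mem_range_self a
  let idx : ↥(Set.range s) → ZMod 4 := fun x => x.2.choose
  have hidx : ∀ x : ↥(Set.range s), s (idx x) = (x : Fin n → ℤ) :=
    fun x => x.2.choose_spec
  have h2 : ∀ a : ZMod 4, step4^[2] a = 0 := by decide
  have key : ∀ i : ℕ, i ≤ 2 → ∀ a b : ZMod 4, (a = b + 1 ∨ b = a + 1) →
      step4^[i] a = step4^[i] b ∨
        (step4^[i] a = step4^[i] b + 1 ∨ step4^[i] b = step4^[i] a + 1) := by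
    intro i hi
    interval_cases i <;> decide
  have key2 : ∀ i : ℕ, i < 2 → ∀ a : ZMod 4,
      step4^[i] a = step4^[i + 1] a ∨
        (step4^[i] a = step4^[i + 1] a + 1 ∨ step4^[i + 1] a = step4^[i] a + 1) := by
    intro i hi
    interval_cases i <;> decide
  refine ⟨2, fun x t => ⟨s (step4^[t] (idx x)), hmem _⟩, ?_, ?_, ?_, ?_, ?_⟩
  · intro x
    exact Subtype.ext (by simpa using hidx x)
  · intro x
    exact Subtype.ext (congrArg s (h2 (idx x)))
  · intro i hi x x' hxx'
    have hR : idx x = idx x' + 1 ∨ idx x' = idx x + 1 := by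
      refine (hadj (idx x) (idx x')).mp ?_
      rw [hidx x, hidx x']
      exact hxx'
    rcases key i hi (idx x) (idx x') hR with h | h
    · exact Or.inl (Subtype.ext (congrArg s h))
    · exact Or.inr ((hadj _ _).mpr h)
  · intro x i hi
    rcases key2 i hi (idx x) with h | h
    · exact Or.inl (Subtype.ext (congrArg s h))
    · exact Or.inr ((hadj _ _).mpr h)
  · intro i hi
    have h0 : idx ⟨s 0, Set.mem_range_self 0⟩ = 0 :=
      hinj (hidx ⟨s 0, Set.mem_range_self 0⟩)
    refine Subtype.ext ?_
    show s (step4^[i] (idx ⟨s 0, Set.mem_range_self 0⟩)) = s 0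
    rw [h0, step4_zero]
end
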